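/- The composed map A ↦ D(Â) = conj(Â) ⊗ Â, from the additive group of N×N symmetric ℤ₂-matrices to unitaries, is a group homomorphism with trivial kernel: D(Â) = I ⊗ I if and only if A is the zero matrix. Consequently, distinct adjacency matrices yield physically distinguishable representations. -/

import Mathlib

open Matrix Kronecker

/-- Vertices of a graph with N = 2^k nodes, encoded as bitstrings of k qubits. -/
abbrev Vtx (k : ℕ) := Fin k → Fin 2

/-- The 2×2 Hadamard matrix. -/
noncomputable def H2 : Matrix (Fin 2) (Fin 2) ℂ :=
  ((Real.sqrt 2 : ℂ))⁻¹ • !![1, 1; 1, -1]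

/-- h(A) = iπ·∑_{i,j} A_{ij} |i,j⟩⟨i,j|. -/
noncomputable def hmat {k : ℕ} (A : Matrix (Vtx k) (Vtx k) (ZMod 2)) :
    Matrix (Vtx k × Vtx k) (Vtx k × Vtx k) ℂ :=
  Matrix.diagonal fun p => Complex.I * (Real.pi : ℂ) * ((A p.1 p.2).val : ℂ)

/-- cexp(K) = I ⊕ exp(K) = |0⟩⟨0|⊗I + |1⟩⟨1|⊗exp(K). -/
noncomputable def cexpM {k : ℕ} (K : Matrix (Vtx k × Vtx k) (Vtx k × Vtx k) ℂ) :
    Matrix (Fin 2 × (Vtx k × Vtx k)) (Fin 2 × (Vtx k × Vtx k)) ℂ :=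
  (Matrix.single 0 0 1) ⊗ₖ (1 : Matrix (Vtx k × Vtx k) (Vtx k × Vtx k) ℂ)
    + (Matrix.single 1 1 1) ⊗ₖ NormedSpace.exp K

/-- The Hadamard transform H^{⊗(2k+1)} on the (2k+1)-qubit space
ℂ² ⊗ (ℂ^{2^k} ⊗ ℂ^{2^k}), given by its entrywise tensor-power formula. -/
noncomputable def Hfull (k : ℕ) :
    Matrix (Fin 2 × (Vtx k × Vtx k)) (Fin 2 × (Vtx k × Vtx k)) ℂ :=
  Matrix.of fun p q =>
    H2 p.1 q.1 * (∏ t, H2 (p.2.1 t) (q.2.1 t)) * ∏ t, H2 (p.2.2 t) (q.2.2 t)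

/-- The log-Hadamard representation Â = H^{⊗(2k+1)}·cexp(h(A))·H^{⊗(2k+1)}. -/
noncomputable def hatRep {k : ℕ} (A : Matrix (Vtx k) (Vtx k) (ZMod 2)) :
    Matrix (Fin 2 × (Vtx k × Vtx k)) (Fin 2 × (Vtx k × Vtx k)) ℂ :=
  Hfull k * cexpM (hmat A) * Hfull k

/-- The doubling D(f) := conj(f) ⊗ f. -/
noncomputable def Dbl {n : Type*} [Fintype n] (f : Matrix n n ℂ) :
    Matrix (n × n) (n × n) ℂ :=
  (f.map (starRingEnd ℂ)) ⊗ₖ f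

lemma H2H2 : H2 * H2 = 1 := by
  have h : ((Real.sqrt 2 : ℂ))⁻¹ * ((Real.sqrt 2 : ℂ))⁻¹ = 2⁻¹ := by
    rw [← mul_inv, ← Complex.ofReal_mul, Real.mul_self_sqrt (by norm_num)]
    norm_num
  rw [H2, smul_mul_smul_comm, h, Matrix.mul_fin_two]
  norm_num
  exact Matrix.one_fin_two.symm

noncomputable def HkM (k : ℕ) : Matrix (Vtx k) (Vtx k) ℂ :=
  Matrix.of fun a b => ∏ t, H2 (a t) (b t)

lemma HkHk (k : ℕ) : HkM k * HkM k = 1 := by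
  ext a b
  rw [Matrix.mul_apply]
  have h1 : ∀ g : Vtx k, HkM k a g * HkM k g b = ∏ t, (H2 (a t) (g t) * H2 (g t) (b t)) := by
    intro g; rw [HkM]; simp [← Finset.prod_mul_distrib]
  simp_rw [h1]
  rw [← Fintype.piFinset_univ,
    ← Finset.prod_univ_sum (fun _ => Finset.univ) (fun t y => H2 (a t) y * H2 y (b t))]
  have h2 : ∀ t : Fin k, ∑ x : Fin 2, H2 (a t) x * H2 x (b t) =
      (1 : Matrix (Fin 2) (Fin 2) ℂ) (a t) (b t) := by
    intro t; rw [← H2H2, Matrix.mul_apply]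
  simp_rw [h2, Matrix.one_apply]
  by_cases h : a = b
  · simp [h]
  · obtain ⟨t, ht⟩ := Function.ne_iff.mp h
    rw [if_neg h]
    exact Finset.prod_eq_zero (Finset.mem_univ t) (if_neg ht)

lemma Hfull_eq (k : ℕ) : Hfull k = H2 ⊗ₖ (HkM k ⊗ₖ HkM k) := by
  ext ⟨i, a, b⟩ ⟨j, c, d⟩
  simp [Hfull, HkM, mul_assoc]

lemma Hfull_sq (k : ℕ) : Hfull k * Hfull k = 1 := by
  rw [Hfull_eq, ← Matrix.mul_kronecker_mul, ← Matrix.mul_kronecker_mul, H2H2, HkHk,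
    Matrix.one_kronecker_one, Matrix.one_kronecker_one]

lemma exp_zmod (a : ZMod 2) :
    Complex.exp (Complex.I * (Real.pi : ℂ) * (a.val : ℂ)) = (-1 : ℂ) ^ a.val := by
  have h : ∀ b : ZMod 2, b = 0 ∨ b = 1 := by decide
  rcases h a with h | h <;> subst h
  · simp
  · simp [ZMod.val_one, mul_comm Complex.I (Real.pi : ℂ), Complex.exp_pi_mul_I]

/-- The diagonal entries of cexp(h(A)). -/
noncomputable def gfun {k : ℕ} (A : Matrix (Vtx k) (Vtx k) (ZMod 2)) :
    Fin 2 × (Vtx k × Vtx k) → ℂ :=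
  fun q => if q.1 = 0 then 1 else (-1 : ℂ) ^ (A q.2.1 q.2.2).val

lemma cexp_hmat {k : ℕ} (A : Matrix (Vtx k) (Vtx k) (ZMod 2)) :
    cexpM (hmat A) = Matrix.diagonal (gfun A) := by
  have he : NormedSpace.exp (hmat A) =
      Matrix.diagonal (fun p : Vtx k × Vtx k => (-1 : ℂ) ^ (A p.1 p.2).val) := by
    rw [hmat, Matrix.exp_diagonal, Pi.exp_def]
    refine congrArg Matrix.diagonal (funext fun p => ?_)
    rw [← Complex.exp_eq_exp_ℂ]
    exact exp_zmod _
  rw [cexpM, he]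
  ext ⟨i, p⟩ ⟨j, q⟩
  rcases Decidable.eq_or_ne p q with hpq | hpq
  · subst hpq
    fin_cases i <;> fin_cases j <;>
      simp [gfun, Matrix.single, Matrix.one_apply, Matrix.diagonal_apply, Prod.ext_iff]
  · fin_cases i <;> fin_cases j <;>
      simp [gfun, Matrix.single, Matrix.one_apply, Matrix.diagonal_apply, Prod.ext_iff, hpq]

lemma neg_pow_add (a b : ZMod 2) :
    ((-1 : ℂ)) ^ ((a + b).val) = (-1 : ℂ) ^ a.val * (-1 : ℂ) ^ b.val := by
  have h : ∀ x : ZMod 2, x = 0 ∨ x = 1 := by decide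
  rcases h a with rfl | rfl <;> rcases h b with rfl | rfl <;>
    norm_num [show ((0 : ZMod 2) + 0) = 0 from rfl, show ((0 : ZMod 2) + 1) = 1 from rfl,
      show ((1 : ZMod 2) + 0) = 1 from rfl, show ((1 : ZMod 2) + 1) = 0 from rfl, show ((2 : ZMod 2)).val = 0 from rfl,
      ZMod.val_one]

lemma conj_mul_lemma {n : Type*} [Fintype n] [DecidableEq n] (H C D : Matrix n n ℂ)
    (h : H * H = 1) : H * (C * D) * H = (H * C * H) * (H * D * H) := by
  have h1 : (H * C * H) * (H * D * H) = H * C * (H * H) * D * H := by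
    simp only [Matrix.mul_assoc]
  rw [h1, h, Matrix.mul_one]
  simp only [Matrix.mul_assoc]

lemma hatRep_add {k : ℕ} (A B : Matrix (Vtx k) (Vtx k) (ZMod 2)) :
    hatRep (A + B) = hatRep A * hatRep B := by
  rw [hatRep, hatRep, hatRep, cexp_hmat, cexp_hmat, cexp_hmat]
  have hD : Matrix.diagonal (gfun (A + B)) =
      Matrix.diagonal (gfun A) * Matrix.diagonal (gfun B) := by
    rw [Matrix.diagonal_mul_diagonal]
    refine congrArg Matrix.diagonal (funext fun q => ?_)
    rcases Decidable.eq_or_ne q.1 0 with h | h <;>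
      simp [gfun, h, Matrix.add_apply, neg_pow_add]
  rw [hD]
  exact conj_mul_lemma _ _ _ (Hfull_sq k)

lemma Dbl_mul {n : Type*} [Fintype n] [DecidableEq n] (f g : Matrix n n ℂ) :
    Dbl (f * g) = Dbl f * Dbl g := by
  rw [Dbl, Dbl, Dbl, Matrix.map_mul, ← Matrix.mul_kronecker_mul]

lemma hatRep_zero {k : ℕ} : hatRep (0 : Matrix (Vtx k) (Vtx k) (ZMod 2)) = 1 := by
  rw [hatRep, cexp_hmat]
  have : Matrix.diagonal (gfun (0 : Matrix (Vtx k) (Vtx k) (ZMod 2))) = 1 := by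
    have : gfun (0 : Matrix (Vtx k) (Vtx k) (ZMod 2)) = fun _ => 1 := by
      funext q
      rcases Decidable.eq_or_ne q.1 0 with h | h <;> simp [gfun, h]
    rw [this, Matrix.diagonal_one]
  rw [this, Matrix.mul_one, Hfull_sq]

/-- The map A ↦ D(Â) is a group homomorphism from the additive group of symmetric
ℤ₂-matrices to unitaries, with trivial kernel: D(Â) = I ⊗ I ↔ A = 0. -/
theorem stmt_12 {k : ℕ} :
    (∀ A B : Matrix (Vtx k) (Vtx k) (ZMod 2), A.IsSymm → B.IsSymm →
      Dbl (hatRep (A + B)) = Dbl (hatRep A) * Dbl (hatRep B)) ∧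
    (∀ A : Matrix (Vtx k) (Vtx k) (ZMod 2), A.IsSymm →
      (Dbl (hatRep A) =
          (1 : Matrix (Fin 2 × (Vtx k × Vtx k)) (Fin 2 × (Vtx k × Vtx k)) ℂ) ⊗ₖ
            (1 : Matrix (Fin 2 × (Vtx k × Vtx k)) (Fin 2 × (Vtx k × Vtx k)) ℂ) ↔
        A = 0)) := by
  constructor
  · intro A B _ _
    rw [hatRep_add, Dbl_mul]
  · intro A _
    constructor
    · intro hE
      set f := hatRep A with hfdef
      have hent : ∀ p q r s : Fin 2 × (Vtx k × Vtx k),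
          (starRingEnd ℂ) (f p q) * f r s =
            (1 : Matrix (Fin 2 × (Vtx k × Vtx k)) (Fin 2 × (Vtx k × Vtx k)) ℂ) p q *
              (1 : Matrix (Fin 2 × (Vtx k × Vtx k)) (Fin 2 × (Vtx k × Vtx k)) ℂ) r s := by
        intro p q r s
        have := congrArg (fun M => M (p, r) (q, s)) hE
        simpa [Dbl, Matrix.kroneckerMap_apply, Matrix.map_apply] using this
      set p0 : Fin 2 × (Vtx k × Vtx k) := (0, (fun _ => 0, fun _ => 0)) with hp0
      set c : ℂ := f p0 p0 with hc
      have hcu : (starRingEnd ℂ) c * c = 1 := by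
        have := hent p0 p0 p0 p0
        simpa [Matrix.one_apply] using this
      have hcne : (starRingEnd ℂ) c ≠ 0 := by
        intro h0
        rw [h0, zero_mul] at hcu
        exact zero_ne_one hcu
      have hf : f = c • (1 : Matrix (Fin 2 × (Vtx k × Vtx k)) (Fin 2 × (Vtx k × Vtx k)) ℂ) := by
        ext r s
        rcases Decidable.eq_or_ne r s with rfl | hrs
        · have h1 := hent p0 p0 r r
          rw [Matrix.one_apply_eq, Matrix.one_apply_eq, mul_one] at h1
          have h2 : (starRingEnd ℂ) c * f r r = (starRingEnd ℂ) c * c := by rw [h1, hcu]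
          have := mul_left_cancel₀ hcne h2
          simp [this, Matrix.smul_apply, Matrix.one_apply]
        · have h1 := hent p0 p0 r s
          rw [Matrix.one_apply_eq, Matrix.one_apply_ne hrs, one_mul] at h1
          have : f r s = 0 := by
            rcases mul_eq_zero.mp h1 with h | h
            · exact absurd h hcne
            · exact h
          simp [this, Matrix.smul_apply, Matrix.one_apply, hrs]
      have hfC : Hfull k * Matrix.diagonal (gfun A) * Hfull k = c • 1 := by
        rw [← cexp_hmat, ← hatRep, ← hfdef, hf]
      have hC : Matrix.diagonal (gfun A) =
          c • (1 : Matrix (Fin 2 × (Vtx k × Vtx k)) (Fin 2 × (Vtx k × Vtx k)) ℂ) := by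
        calc Matrix.diagonal (gfun A)
            = (Hfull k * Hfull k) * Matrix.diagonal (gfun A) * (Hfull k * Hfull k) := by
              rw [Hfull_sq]; simp
          _ = Hfull k * (Hfull k * Matrix.diagonal (gfun A) * Hfull k) * Hfull k := by
              simp only [Matrix.mul_assoc]
          _ = Hfull k * (c • 1) * Hfull k := by rw [hfC]
          _ = c • (Hfull k * Hfull k) := by
              rw [Matrix.mul_smul, Matrix.smul_mul, Matrix.mul_one]
          _ = c • 1 := by rw [Hfull_sq]
      have hc1 : c = 1 := by
        have := congrArg (fun M => M p0 p0) hC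
        simpa [gfun, hp0, Matrix.diagonal_apply_eq, Matrix.smul_apply, Matrix.one_apply] using
          this.symm
      ext i j
      have := congrArg (fun M => M (1, (i, j)) (1, (i, j))) hC
      simp only [Matrix.diagonal_apply_eq, Matrix.smul_apply, Matrix.one_apply_eq, smul_eq_mul,
        mul_one, hc1, gfun] at this
      have hval : ((-1 : ℂ)) ^ (A i j).val = 1 := by simpa using this
      have h : ∀ x : ZMod 2, x = 0 ∨ x = 1 := by decide
      rcases h (A i j) with h0 | h0
      · simp [h0]
      · rw [h0, ZMod.val_one] at hval
        norm_num at hval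
    · intro h
      subst h
      rw [hatRep_zero, Dbl]
      rw [Matrix.map_one _ (map_zero _) (map_one _)]
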